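/- For every integer r ≥ 2 and every α ∈ [0,1], α²·2^{r−2}·r(r−1) + α·r·(3 − 2^r − r) + 2^{r+1} − 4 ≥ 0. -/
import Mathlib

lemma four_mul_le_two_pow : ∀ r : ℕ, 4 ≤ r → 4 * r ≤ 2 ^ r := by
  intro r hr
  induction r with
  | zero => omega
  | succ n ih =>
    rcases Nat.lt_or_ge n 4 with h | h
    · interval_cases n <;> simp_all <;> omega
    · have := ih (by omega)
      have : 2 ^ n ≥ 4 * n := this
      calc 4 * (n + 1) ≤ 2 * (4 * n) := by omega
        _ ≤ 2 * 2 ^ n := by omega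
        _ = 2 ^ (n + 1) := by ring

theorem stmt_3 (r : ℕ) (hr : 2 ≤ r) (α : ℝ) (h0 : 0 ≤ α) (h1 : α ≤ 1) :
    0 ≤ α ^ 2 * 2 ^ (r - 2) * ((r : ℝ) * ((r : ℝ) - 1))
        + α * (r : ℝ) * (3 - 2 ^ r - (r : ℝ)) + 2 ^ (r + 1) - 4 := by
  rcases Nat.lt_or_ge r 4 with h4 | h4
  · interval_cases r
    · norm_num
      nlinarith [mul_nonneg (sub_nonneg.2 h1) (by linarith : (0:ℝ) ≤ 2 - α)]
    · norm_num
      nlinarith [sq_nonneg (α - 1)]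
  · set y : ℝ := 2 ^ (r - 2) with hy
    have e : r - 2 + 2 = r := by omega
    have h2r : (2:ℝ) ^ r = 4 * y := by
      calc (2:ℝ) ^ r = 2 ^ (r - 2 + 2) := by rw [e]
        _ = 4 * y := by rw [pow_add, hy]; ring
    have h2r1 : (2:ℝ) ^ (r + 1) = 8 * y := by
      rw [pow_succ, h2r]; ring
    have hR : (4:ℝ) ≤ (r:ℝ) := by exact_mod_cast h4
    have hy4 : (4:ℝ) ≤ y := by
      rw [hy]
      calc (4:ℝ) = 2 ^ 2 := by norm_num
        _ ≤ 2 ^ (r - 2) := by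
          apply pow_le_pow_right₀ (by norm_num) (by omega)
    have hyr : (r:ℝ) ≤ y := by
      have h := four_mul_le_two_pow r h4
      have : (4:ℝ) * r ≤ 2 ^ r := by exact_mod_cast h
      rw [h2r] at this; linarith
    have t1 : 0 ≤ 16 * y * ((r:ℝ) - 2) * (y - r) := by
      apply mul_nonneg
      apply mul_nonneg
      apply mul_nonneg <;> linarith
      all_goals linarith
    have q1 : (0:ℝ) ≤ 8 * (r:ℝ)^2 - 24 * r - 16 := by nlinarith
    have t2 : 0 ≤ (8 * (r:ℝ)^2 - 24 * r - 16) * (y - r) := by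
      apply mul_nonneg q1 (by linarith)
    have t3 : (0:ℝ) ≤ (r:ℝ) * (7 * (r:ℝ)^2 - 18 * r - 25) := by nlinarith
    have hD : 0 ≤ 4 * (y * r * ((r:ℝ) - 1)) * (8 * y - 4) - ((r:ℝ) * (3 - 4 * y - r)) ^ 2 := by
      nlinarith [t1, t2, t3]
    have ha : 0 < y * (r:ℝ) * ((r:ℝ) - 1) := by
      apply mul_pos
      apply mul_pos <;> linarith
      linarith
    rw [h2r, h2r1]
    nlinarith [sq_nonneg (2 * (y * (r:ℝ) * ((r:ℝ) - 1)) * α + (r:ℝ) * (3 - 4 * y - (r:ℝ))), hD, ha, mul_pos ha ha]
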